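/- Let U be a unital in PG(2,q²) and let R ∈ U. If strictly more than q² − q lines through R each contain at least two points of a subset U₀ ⊆ U, then R belongs to every unital of PG(2,q²) containing U₀. -/

import Mathlib

/-- Points of `PG(2, q²)`: the projective plane over a field `K` with `q²` elements. -/
abbrev PGPoint (K : Type*) [Field K] := Projectivization K (Fin 3 → K)

/-- A line of `PG(2, q²)`: a 2-dimensional subspace of `K³`. -/
def IsLine {K : Type*} [Field K] (W : Submodule K (Fin 3 → K)) : Prop :=
  Module.finrank K W = 2

/-- The set of projective points on a subspace. -/
def linePts {K : Type*} [Field K] (W : Submodule K (Fin 3 → K)) : Set (PGPoint K) :=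
  {p | p.submodule ≤ W}

/-- A unital in `PG(2, q²)`: a set of `q³+1` points meeting every line in `1` or `q+1` points. -/
def IsUnital {K : Type*} [Field K] (q : ℕ) (U : Set (PGPoint K)) : Prop :=
  U.ncard = q ^ 3 + 1 ∧
  ∀ W : Submodule K (Fin 3 → K), IsLine W →
    (U ∩ linePts W).ncard = 1 ∨ (U ∩ linePts W).ncard = q + 1

open Module Submodule

section Aux

variable {K V : Type*} [Field K] [AddCommGroup V] [Module K V]

instance aux_finite_proj [Finite V] : Finite (Projectivization K V) := by
  have hs : Function.Surjective (Projectivization.mk' K (V := V)) := fun p => by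
    induction p using Projectivization.ind with
    | h v hv => exact ⟨⟨v, hv⟩, rfl⟩
  exact Finite.of_surjective _ hs

lemma aux_mk_eq_iff_mem {v : V} (hv : v ≠ 0) (p : Projectivization K V) :
    Projectivization.mk K v hv = p ↔ v ∈ p.submodule := by
  constructor
  · rintro rfl
    rw [Projectivization.submodule_mk]
    exact Submodule.mem_span_singleton_self v
  · intro h
    apply Projectivization.submodule_injective
    rw [Projectivization.submodule_mk]
    exact Submodule.eq_of_le_of_finrank_le
      ((Submodule.span_singleton_le_iff_mem _ _).2 h)
      (by rw [finrank_span_singleton hv, p.finrank_submodule])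

lemma aux_proj_card [Fintype K] [Fintype V] (hV : Module.finrank K V = 2) :
    Nat.card (Projectivization K V) = Fintype.card K + 1 := by
  classical
  have hnt : Nontrivial V := Module.nontrivial_of_finrank_pos (R := K) (by omega)
  set c := Fintype.card K with hc
  have hc1 : 1 < c := Fintype.one_lt_card
  have : Fintype (Projectivization K V) := Fintype.ofFinite _
  obtain ⟨p₀⟩ : Nonempty (Projectivization K V) := inferInstance
  let f : V → Projectivization K V := fun v => if h : v = 0 then p₀ else Projectivization.mk K v h
  let F : Finset V := Finset.univ.filter (· ≠ 0)
  have hmap : ∀ v ∈ F, f v ∈ (Finset.univ : Finset (Projectivization K V)) :=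
    fun _ _ => Finset.mem_univ _
  have hsum := Finset.card_eq_sum_card_fiberwise hmap
  have hF : F.card = c ^ 2 - 1 := by
    have hFe : F = Finset.univ \ {0} := by
      ext v; simp [F]
    rw [hFe, Finset.card_sdiff_of_subset (by simp)]
    rw [Finset.card_univ, Module.card_eq_pow_finrank (K := K) (V := V), hV]
    simp
    rfl
  have hfib : ∀ p : Projectivization K V, (F.filter (fun v => f v = p)).card = c - 1 := by
    intro p
    have hfe : F.filter (fun v => f v = p)
        = (Finset.univ.filter (fun v => v ∈ p.submodule)).erase 0 := by
      ext v
      simp only [Finset.mem_filter, Finset.mem_erase, Finset.mem_univ, true_and, F]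
      constructor
      · rintro ⟨hv, hfv⟩
        rw [show f v = Projectivization.mk K v hv from dif_neg hv] at hfv
        exact ⟨hv, (aux_mk_eq_iff_mem hv p).1 hfv⟩
      · rintro ⟨hv, hmem⟩
        refine ⟨hv, ?_⟩
        rw [show f v = Projectivization.mk K v hv from dif_neg hv]
        exact (aux_mk_eq_iff_mem hv p).2 hmem
    rw [hfe, Finset.card_erase_of_mem (by simp)]
    congr 1
    have h1 : (Finset.univ.filter (fun v => v ∈ p.submodule)).card
        = Fintype.card p.submodule := (Fintype.card_subtype _).symm
    rw [h1, Module.card_eq_pow_finrank (K := K) (V := p.submodule), p.finrank_submodule, pow_one]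
  rw [hF] at hsum
  rw [Finset.sum_congr rfl (fun p _ => hfib p), Finset.sum_const, Finset.card_univ,
    smul_eq_mul] at hsum
  have hcard : Fintype.card (Projectivization K V) = Nat.card (Projectivization K V) :=
    (Nat.card_eq_fintype_card).symm
  rw [hcard] at hsum
  have key : (c + 1) * (c - 1) = c ^ 2 - 1 := by
    have h1 : (1:ℕ) ≤ c := hc1.le
    have h2 : (1:ℕ) ≤ c ^ 2 := Nat.one_le_pow _ _ (by omega)
    zify [h1, h2]
    ring
  have := hsum.symm.trans key.symm
  exact Nat.eq_of_mul_eq_mul_right (by omega) this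

lemma aux_finrank_comap_mkQ [FiniteDimensional K V] (R₀ : Submodule K V)
    (H : Submodule K (V ⧸ R₀)) :
    finrank K (Submodule.comap R₀.mkQ H) = finrank K H + finrank K R₀ := by
  set W := Submodule.comap R₀.mkQ H with hW
  have hRW : R₀ ≤ W := by
    intro x hx
    rw [hW, Submodule.mem_comap, Submodule.mkQ_apply,
      (Submodule.Quotient.mk_eq_zero R₀).2 hx]
    exact H.zero_mem
  have h4 := LinearMap.finrank_range_add_finrank_ker (R₀.mkQ.domRestrict W)
  rw [LinearMap.range_domRestrict, Submodule.map_comap_eq_of_surjective R₀.mkQ_surjective,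
    LinearMap.ker_domRestrict, Submodule.ker_mkQ] at h4
  have h5 : finrank K (Submodule.comap W.subtype R₀) = finrank K R₀ :=
    (Submodule.comapSubtypeEquivOfLe hRW).finrank_eq
  rw [h5] at h4
  omega

end Aux

section Aux2

variable {K : Type*} [Field K] [Fintype K]

lemma aux_isLine_sup {P R : PGPoint K} (h : P ≠ R) : IsLine (R.submodule ⊔ P.submodule) := by
  have hinf : R.submodule ⊓ P.submodule = ⊥ := by
    by_contra hne
    have h1 : 1 ≤ finrank K (R.submodule ⊓ P.submodule : Submodule K (Fin 3 → K)) := by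
      rw [Nat.one_le_iff_ne_zero]
      intro h0
      exact hne (Submodule.finrank_eq_zero.1 h0)
    have h2 : R.submodule ⊓ P.submodule = R.submodule :=
      Submodule.eq_of_le_of_finrank_le inf_le_left (by rw [R.finrank_submodule]; omega)
    have h3 : R.submodule ≤ P.submodule := h2 ▸ inf_le_right
    have h4 : R.submodule = P.submodule :=
      Submodule.eq_of_le_of_finrank_le h3
        (by rw [R.finrank_submodule, P.finrank_submodule])
    exact h (Projectivization.submodule_injective h4.symm)
  have := Submodule.finrank_sup_add_finrank_inf_eq R.submodule P.submodule
  rw [hinf, R.finrank_submodule, P.finrank_submodule] at this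
  simp only [finrank_bot] at this
  unfold IsLine
  omega

lemma aux_lines_through_count (R : PGPoint K) :
    {W : Submodule K (Fin 3 → K) | IsLine W ∧ R.submodule ≤ W}.ncard = Fintype.card K + 1 := by
  classical
  set R₀ := R.submodule with hR₀
  have h1 : finrank K R₀ = 1 := R.finrank_submodule
  have hQ : finrank K ((Fin 3 → K) ⧸ R₀) = 2 := by
    have hq := Submodule.finrank_quotient_add_finrank R₀
    have h3 : finrank K (Fin 3 → K) = 3 := by
      rw [Module.finrank_fin_fun]
    omega
  have key : {W : Submodule K (Fin 3 → K) | IsLine W ∧ R₀ ≤ W}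
      = (Submodule.comap R₀.mkQ) '' {H : Submodule K ((Fin 3 → K) ⧸ R₀) | finrank K H = 1} := by
    ext W
    simp only [Set.mem_image, Set.mem_setOf_eq]
    constructor
    · rintro ⟨hW, hRW⟩
      have hcm : Submodule.comap R₀.mkQ (Submodule.map R₀.mkQ W) = W := by
        rw [Submodule.comap_map_eq, Submodule.ker_mkQ, sup_of_le_left hRW]
      refine ⟨Submodule.map R₀.mkQ W, ?_, hcm⟩
      have h6 := aux_finrank_comap_mkQ R₀ (Submodule.map R₀.mkQ W)
      rw [hcm] at h6
      unfold IsLine at hW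
      omega
    · rintro ⟨H, hH, rfl⟩
      constructor
      · unfold IsLine
        rw [aux_finrank_comap_mkQ, hH, h1]
      · intro x hx
        rw [Submodule.mem_comap, Submodule.mkQ_apply,
          (Submodule.Quotient.mk_eq_zero R₀).2 hx]
        exact H.zero_mem
  rw [key, Set.ncard_image_of_injective _
    (Submodule.comap_injective_of_surjective R₀.mkQ_surjective)]
  have hcoe : {H : Submodule K ((Fin 3 → K) ⧸ R₀) | finrank K H = 1}.ncard
      = Nat.card (Projectivization K ((Fin 3 → K) ⧸ R₀)) := by
    rw [← Nat.card_coe_set_eq]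
    refine Nat.card_congr ?_
    exact (Equiv.subtypeEquivRight (fun H => by simp)).trans
      (Projectivization.equivSubmodule K _).symm
  rw [hcoe]
  have : Fintype ((Fin 3 → K) ⧸ R₀) := Fintype.ofFinite _
  exact aux_proj_card hQ

lemma aux_secant_count (q : ℕ) (hcard : Fintype.card K = q ^ 2)
    (U' : Set (PGPoint K)) (hU' : IsUnital q U') (R : PGPoint K) (hR : R ∉ U') :
    {W : Submodule K (Fin 3 → K) | IsLine W ∧ R.submodule ≤ W ∧
      (U' ∩ linePts W).ncard = q + 1}.ncard = q ^ 2 - q := by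
  classical
  have hq2 : 2 ≤ q := by
    have h2 : 1 < Fintype.card K := Fintype.one_lt_card
    by_contra h
    interval_cases q <;> omega
  have : Fintype (PGPoint K) := Fintype.ofFinite _
  have : Fintype (Submodule K (Fin 3 → K)) := Fintype.ofFinite _
  set R₀ := R.submodule with hR₀
  set L : Finset (Submodule K (Fin 3 → K)) := Set.toFinset {W | IsLine W ∧ R₀ ≤ W} with hL
  set A : Finset (PGPoint K) := U'.toFinset with hA
  set φ : PGPoint K → Submodule K (Fin 3 → K) := fun P => R₀ ⊔ P.submodule with hφ
  have hPneR : ∀ P ∈ U', P ≠ R := fun P hP hPR => hR (hPR ▸ hP)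
  have hφL : ∀ P ∈ A, φ P ∈ L := by
    intro P hP
    rw [hA, Set.mem_toFinset] at hP
    rw [hL, Set.mem_toFinset]
    exact ⟨aux_isLine_sup (hPneR P hP), le_sup_left⟩
  have hmemiff : ∀ P ∈ U', ∀ W ∈ L, (P ∈ linePts W ↔ φ P = W) := by
    intro P hP W hW
    rw [hL, Set.mem_toFinset] at hW
    constructor
    · intro hPW
      refine Submodule.eq_of_le_of_finrank_le (sup_le hW.2 hPW) ?_
      have h2 : finrank K (φ P : Submodule K (Fin 3 → K)) = 2 := aux_isLine_sup (hPneR P hP)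
      rw [h2, hW.1]
    · intro hEq
      show P.submodule ≤ W
      rw [← hEq]
      exact le_sup_right
  have hsum := Finset.card_eq_sum_card_fiberwise hφL
  have hfib : ∀ W ∈ L, (A.filter (fun P => φ P = W)).card = (U' ∩ linePts W).ncard := by
    intro W hW
    rw [Set.ncard_eq_toFinset_card']
    congr 1
    ext P
    simp only [Finset.mem_filter, hA, Set.mem_toFinset, Set.mem_inter_iff]
    constructor
    · rintro ⟨hP, hfP⟩
      exact ⟨hP, (hmemiff P hP W hW).2 hfP⟩
    · rintro ⟨hP, hPW⟩
      exact ⟨hP, (hmemiff P hP W hW).1 hPW⟩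
  rw [Finset.sum_congr rfl hfib] at hsum
  have hAcard : A.card = q ^ 3 + 1 := by
    rw [hA, ← Set.ncard_eq_toFinset_card']
    exact hU'.1
  have hLcard : L.card = q ^ 2 + 1 := by
    rw [hL, ← Set.ncard_eq_toFinset_card', aux_lines_through_count R, hcard]
  set S : Finset (Submodule K (Fin 3 → K)) :=
    L.filter (fun W => (U' ∩ linePts W).ncard = q + 1) with hS
  have hsplit : ∑ W ∈ L, (U' ∩ linePts W).ncard = S.card * (q + 1) + (L.card - S.card) := by
    rw [← Finset.sum_filter_add_sum_filter_not L (fun W => (U' ∩ linePts W).ncard = q + 1)]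
    have hS1 : ∑ W ∈ S, (U' ∩ linePts W).ncard = S.card * (q + 1) := by
      rw [Finset.sum_congr rfl (fun W hW => (Finset.mem_filter.1 hW).2), Finset.sum_const,
        smul_eq_mul]
    have hS2 : ∑ W ∈ L.filter (fun W => ¬ (U' ∩ linePts W).ncard = q + 1),
        (U' ∩ linePts W).ncard = (L.filter (fun W => ¬ (U' ∩ linePts W).ncard = q + 1)).card := by
      rw [Finset.sum_congr rfl (fun W hW => ?_), Finset.sum_const, smul_eq_mul, mul_one]
      obtain ⟨hWL, hWn⟩ := Finset.mem_filter.1 hW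
      rw [hL, Set.mem_toFinset] at hWL
      rcases hU'.2 W hWL.1 with h | h
      · exact h
      · exact absurd h hWn
    rw [hS1, hS2, Finset.filter_not, Finset.card_sdiff_of_subset (Finset.filter_subset _ _)]
  rw [hsplit, hAcard, hLcard] at hsum
  have hSle : S.card ≤ L.card := Finset.card_le_card (Finset.filter_subset _ _)
  rw [hLcard] at hSle
  have hScard : S.card = q ^ 2 - q := by
    have hq2' : q ≤ q ^ 2 := Nat.le_self_pow (by omega) q
    have hq3' : q ^ 2 ≤ q ^ 3 := Nat.pow_le_pow_right (by omega) (by omega)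
    have hmul : S.card * (q + 1) = S.card * q + S.card := by ring
    rw [hmul] at hsum
    obtain ⟨a, ha⟩ : ∃ a, S.card * q = a := ⟨_, rfl⟩
    rw [ha] at hsum
    have ha' : a = q ^ 3 - q ^ 2 := by omega
    have hb : (q ^ 2 - q) * q = q ^ 3 - q ^ 2 := by
      zify [hq2', hq3']
      ring
    have : S.card * q = (q ^ 2 - q) * q := by omega
    exact Nat.eq_of_mul_eq_mul_right (by omega) this
  rw [← hScard]
  rw [Set.ncard_eq_toFinset_card']
  congr 1
  ext W
  simp only [Set.mem_toFinset, Set.mem_setOf_eq, hS, Finset.mem_filter, hL, Set.mem_toFinset,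
    Set.mem_setOf_eq]
  tauto

end Aux2

/-- Let `U` be a unital in `PG(2,q²)`, `R ∈ U`, and `U₀ ⊆ U`. If strictly more than
`q² − q` lines through `R` each contain at least two points of `U₀`, then `R` belongs
to every unital of `PG(2,q²)` containing `U₀`. -/
theorem stmt13 {K : Type*} [Field K] [Fintype K] (q : ℕ)
    (hcard : Fintype.card K = q ^ 2)
    (U U₀ : Set (PGPoint K)) (hU : IsUnital q U) (hU₀ : U₀ ⊆ U)
    (R : PGPoint K) (hR : R ∈ U)
    (hlines : {W : Submodule K (Fin 3 → K) | IsLine W ∧ R.submodule ≤ W ∧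
        2 ≤ (U₀ ∩ linePts W).ncard}.ncard > q ^ 2 - q) :
    ∀ U' : Set (PGPoint K), IsUnital q U' → U₀ ⊆ U' → R ∈ U' := by
  intro U' hU' hU₀'
  by_contra hR'
  have hsec := aux_secant_count q hcard U' hU' R hR'
  have hsub : {W : Submodule K (Fin 3 → K) | IsLine W ∧ R.submodule ≤ W ∧
      2 ≤ (U₀ ∩ linePts W).ncard}
      ⊆ {W : Submodule K (Fin 3 → K) | IsLine W ∧ R.submodule ≤ W ∧
        (U' ∩ linePts W).ncard = q + 1} := by
    rintro W ⟨hW, hRW, h2⟩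
    refine ⟨hW, hRW, ?_⟩
    have hle : (U₀ ∩ linePts W).ncard ≤ (U' ∩ linePts W).ncard :=
      Set.ncard_le_ncard (Set.inter_subset_inter_left _ hU₀') (Set.toFinite _)
    rcases hU'.2 W hW with h | h
    · omega
    · exact h
  have hfin : {W : Submodule K (Fin 3 → K) | IsLine W ∧ R.submodule ≤ W ∧
      (U' ∩ linePts W).ncard = q + 1}.Finite := Set.toFinite _
  have := Set.ncard_le_ncard hsub hfin
  omega
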